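/- Packing lemma (cross-typicality bound): Let p ∈ 𝒫(𝒳), W, W̄ : 𝒳 → 𝒫(𝒴) channels, and x̄^n ∈ 𝒯ⁿ_{p̄,δ}. Then (pW)ⁿ(𝒯ⁿ_{W̄,δ}(x̄^n)) ≤ (n+1)^{|𝒳||𝒴|}·exp₂{ −n (I(p̄; W̄) − f₃(δ)) } for some f₃(δ) > 0 with f₃(δ) → 0 as δ → 0. -/

import Mathlib

open Finset
open scoped Classical

/-- Number of occurrences of the letter `a` in the sequence `x`. -/
def cnt {𝒳 : Type*} [DecidableEq 𝒳] {n : ℕ} (a : 𝒳) (x : Fin n → 𝒳) : ℕ :=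
  (Finset.univ.filter fun i => x i = a).card

/-- Number of joint occurrences of the pair `(a, b)` in the pair of sequences `(x, y)`. -/
def cnt2 {𝒳 𝒴 : Type*} [DecidableEq 𝒳] [DecidableEq 𝒴] {n : ℕ}
    (a : 𝒳) (b : 𝒴) (x : Fin n → 𝒳) (y : Fin n → 𝒴) : ℕ :=
  (Finset.univ.filter fun i => x i = a ∧ y i = b).card

/-- The set `𝒯ⁿ_{p,δ}` of `δ`-typical sequences for a distribution `p`. -/
noncomputable def typSet {𝒳 : Type*} [Fintype 𝒳] [DecidableEq 𝒳] (n : ℕ)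
    (p : 𝒳 → ℝ) (δ : ℝ) : Finset (Fin n → 𝒳) :=
  Finset.univ.filter fun x =>
    ∀ a, |(cnt a x : ℝ) / n - p a| < δ ∧ (p a = 0 → cnt a x = 0)

/-- The set `𝒯ⁿ_{W,δ}(x)` of conditionally `δ`-typical output sequences given input `x`. -/
noncomputable def condTypSet {𝒳 𝒴 : Type*} [Fintype 𝒳] [DecidableEq 𝒳]
    [Fintype 𝒴] [DecidableEq 𝒴] (n : ℕ)
    (W : 𝒳 → 𝒴 → ℝ) (δ : ℝ) (x : Fin n → 𝒳) : Finset (Fin n → 𝒴) :=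
  Finset.univ.filter fun y => ∀ a b,
    |(cnt2 a b x y : ℝ) / n - W a b * ((cnt a x : ℝ) / n)| < δ ∧
      (W a b = 0 → cnt2 a b x y = 0)

/-- Shannon entropy (in bits). -/
noncomputable def shannonEntropy {𝒴 : Type*} [Fintype 𝒴] (q : 𝒴 → ℝ) : ℝ :=
  -∑ y, q y * Real.logb 2 (q y)

/-- Conditional entropy `H(W|p)` (in bits). -/
noncomputable def condEntropyChan {𝒳 𝒴 : Type*} [Fintype 𝒳] [Fintype 𝒴]
    (W : 𝒳 → 𝒴 → ℝ) (p : 𝒳 → ℝ) : ℝ :=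
  -∑ x, ∑ y, p x * W x y * Real.logb 2 (W x y)

/-- Output distribution `pW` of the channel `W` under input distribution `p`. -/
def outDist {𝒳 𝒴 : Type*} [Fintype 𝒳] (p : 𝒳 → ℝ) (W : 𝒳 → 𝒴 → ℝ) : 𝒴 → ℝ :=
  fun y => ∑ x, p x * W x y

/-- Mutual information `I(p;W) = H(pW) − H(W|p)` (in bits). -/
noncomputable def mutInfo {𝒳 𝒴 : Type*} [Fintype 𝒳] [Fintype 𝒴]
    (p : 𝒳 → ℝ) (W : 𝒳 → 𝒴 → ℝ) : ℝ :=
  shannonEntropy (outDist p W) - condEntropyChan W p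


lemma neg_mul_log_le_sqrt {d : ℝ} (hd : 0 ≤ d) : -(d * Real.log d) ≤ 2 * Real.sqrt d := by
  rcases eq_or_lt_of_le hd with h | h
  · simp [← h]
  · have hs : 0 < Real.sqrt d := Real.sqrt_pos.mpr h
    have h1 : Real.log d = 2 * Real.log (Real.sqrt d) := by
      rw [Real.log_sqrt hd]; ring
    have h2 : -Real.log (Real.sqrt d) = Real.log (Real.sqrt d)⁻¹ := (Real.log_inv _).symm
    have h3 : Real.log (Real.sqrt d)⁻¹ ≤ (Real.sqrt d)⁻¹ - 1 :=
      Real.log_le_sub_one_of_pos (by positivity)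
    have h4 : -(d * Real.log d) = 2 * (d * Real.log (Real.sqrt d)⁻¹) := by
      rw [← h2, h1]; ring
    rw [h4]
    have h5 : d * Real.log (Real.sqrt d)⁻¹ ≤ d * (Real.sqrt d)⁻¹ :=
      mul_le_mul_of_nonneg_left (le_trans h3 (by linarith)) hd
    have h6 : d * (Real.sqrt d)⁻¹ = Real.sqrt d := by
      rw [← div_eq_mul_inv]; exact Real.div_sqrt
    nlinarith [h5, h6]

lemma xlogx_abs_diff {s t ε : ℝ} (hs0 : 0 ≤ s) (ht0 : 0 ≤ t) (hs1 : s ≤ 1) (ht1 : t ≤ 1)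
    (hst : |t - s| ≤ ε) : |t * Real.log t - s * Real.log s| ≤ 2 * Real.sqrt ε + ε := by
  have hε : 0 ≤ ε := le_trans (abs_nonneg _) hst
  wlog h : s ≤ t generalizing s t
  · have := this ht0 hs0 ht1 hs1 (by rwa [abs_sub_comm]) (le_of_not_ge h)
    rwa [abs_sub_comm]
  set d := t - s with hdd
  have hd0 : 0 ≤ d := sub_nonneg.mpr h
  have hdε : d ≤ ε := by rwa [abs_of_nonneg hd0] at hst
  have hlt : t * Real.log t ≤ 0 := by
    nlinarith [Real.log_nonpos ht0 ht1, ht0]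
  have key1 : t * Real.log t - s * Real.log s ≤ d := by
    rcases eq_or_lt_of_le hs0 with hs | hs
    · rw [← hs]; simp; linarith
    · have htpos : 0 < t := lt_of_lt_of_le hs h
      have h1 : t * Real.log t - s * Real.log s
          = d * Real.log t + s * (Real.log t - Real.log s) := by rw [hdd]; ring
      have h2 : d * Real.log t ≤ 0 := by
        nlinarith [Real.log_nonpos ht0 ht1]
      have h3 : Real.log t - Real.log s = Real.log (t / s) :=
        (Real.log_div (ne_of_gt htpos) (ne_of_gt hs)).symm
      have h4 : Real.log (t / s) ≤ t / s - 1 :=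
        Real.log_le_sub_one_of_pos (div_pos htpos hs)
      have h5 : s * (Real.log t - Real.log s) ≤ s * (t / s - 1) := by
        rw [h3]; exact mul_le_mul_of_nonneg_left h4 hs0
      have h6 : s * (t / s - 1) = d := by field_simp; exact hdd.symm
      linarith
  have key2 : s * Real.log s - t * Real.log t ≤ 2 * Real.sqrt d := by
    have h1 : s * Real.log s ≤ s * Real.log t := by
      rcases eq_or_lt_of_le hs0 with hs | hs
      · rw [← hs]; simp
      · exact mul_le_mul_of_nonneg_left (Real.log_le_log hs h) hs0
    have h2 : d * Real.log d ≤ d * Real.log t := by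
      rcases eq_or_lt_of_le hd0 with hd2 | hd2
      · rw [← hd2]; simp
      · exact mul_le_mul_of_nonneg_left (Real.log_le_log hd2 (by linarith)) hd0
    have h3 : s * Real.log t + d * Real.log t = t * Real.log t := by rw [hdd]; ring
    have h4 : s * Real.log s - t * Real.log t ≤ -(d * Real.log d) := by linarith
    exact le_trans h4 (neg_mul_log_le_sqrt hd0)
  have hsq : Real.sqrt d ≤ Real.sqrt ε := Real.sqrt_le_sqrt hdε
  have hsε : 0 ≤ Real.sqrt ε := Real.sqrt_nonneg ε
  rw [abs_le]
  constructor <;> nlinarith [key1, key2, hsq, hdε, hsε]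

lemma en_cont {ι : Type*} [Fintype ι] {u v : ι → ℝ} {ε : ℝ}
    (hu : ∀ i, 0 ≤ u i ∧ u i ≤ 1) (hv : ∀ i, 0 ≤ v i ∧ v i ≤ 1)
    (hd : ∀ i, |u i - v i| ≤ ε) :
    |(∑ i, u i * Real.log (u i)) - ∑ i, v i * Real.log (v i)|
      ≤ (Fintype.card ι) * (2 * Real.sqrt ε + ε) := by
  classical
  rw [← Finset.sum_sub_distrib]
  refine le_trans (Finset.abs_sum_le_sum_abs _ _) ?_
  rw [← Finset.card_univ, ← nsmul_eq_mul, ← Finset.sum_const]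
  exact Finset.sum_le_sum fun i _ =>
    xlogx_abs_diff (hv i).1 (hu i).1 (hv i).2 (hu i).2 (hd i)

lemma gibbs {ι : Type*} (s : Finset ι) (M q : ι → ℝ) {n : ℝ} (hn : 0 < n)
    (hM : ∀ i ∈ s, 0 < M i) (hq : ∀ i ∈ s, 0 < q i)
    (hMs : ∑ i ∈ s, M i = n) (hqs : ∑ i ∈ s, q i ≤ 1) :
    ∑ i ∈ s, M i * Real.log (q i) ≤ ∑ i ∈ s, M i * Real.log (M i / n) := by
  rw [← sub_nonpos, ← Finset.sum_sub_distrib]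
  have h1 : ∀ i ∈ s, M i * Real.log (q i) - M i * Real.log (M i / n)
      ≤ n * q i - M i := by
    intro i hi
    have hMi := hM i hi; have hqi := hq i hi
    have hl : Real.log (q i) - Real.log (M i / n) = Real.log (q i / (M i / n)) :=
      (Real.log_div (ne_of_gt hqi) (by positivity)).symm
    have h2 : Real.log (q i / (M i / n)) ≤ q i / (M i / n) - 1 :=
      Real.log_le_sub_one_of_pos (by positivity)
    have h3 : M i * (q i / (M i / n) - 1) = n * q i - M i := by field_simp
    nlinarith [mul_le_mul_of_nonneg_left h2 hMi.le]
  calc ∑ i ∈ s, (M i * Real.log (q i) - M i * Real.log (M i / n))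
      ≤ ∑ i ∈ s, (n * q i - M i) := Finset.sum_le_sum h1
    _ = n * (∑ i ∈ s, q i) - n := by
        rw [Finset.sum_sub_distrib, ← Finset.mul_sum, hMs]
    _ ≤ 0 := by nlinarith

section CntLemmas
variable {𝒳 𝒴 : Type*} [Fintype 𝒳] [DecidableEq 𝒳] [Fintype 𝒴] [DecidableEq 𝒴] {n : ℕ}

lemma cnt_le (a : 𝒳) (x : Fin n → 𝒳) : cnt a x ≤ n := by
  simpa [cnt] using Finset.card_filter_le Finset.univ (fun i => x i = a)

lemma cnt2_le (a : 𝒳) (b : 𝒴) (x : Fin n → 𝒳) (y : Fin n → 𝒴) : cnt2 a b x y ≤ n := by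
  simpa [cnt2] using Finset.card_filter_le Finset.univ (fun i => x i = a ∧ y i = b)

lemma sum_cnt (x : Fin n → 𝒳) : ∑ a, cnt a x = n := by
  classical
  have h := Finset.card_eq_sum_card_fiberwise
    (s := (Finset.univ : Finset (Fin n))) (t := Finset.univ) (f := x)
    (fun i _ => Finset.mem_univ (x i))
  simpa [cnt] using h.symm

lemma sum_cnt2 (a : 𝒳) (x : Fin n → 𝒳) (y : Fin n → 𝒴) :
    ∑ b, cnt2 a b x y = cnt a x := by
  classical
  have h := Finset.card_eq_sum_card_fiberwise
    (s := Finset.univ.filter fun i => x i = a) (t := Finset.univ) (f := y)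
    (fun i _ => Finset.mem_univ (y i))
  rw [cnt, h]
  refine Finset.sum_congr rfl fun b _ => ?_
  rw [cnt2, Finset.filter_filter]

lemma cnt_eq_sum_cnt2 (b : 𝒴) (x : Fin n → 𝒳) (y : Fin n → 𝒴) :
    cnt b y = ∑ a, cnt2 a b x y := by
  classical
  have h := Finset.card_eq_sum_card_fiberwise
    (s := Finset.univ.filter fun i => y i = b) (t := Finset.univ) (f := x)
    (fun i _ => Finset.mem_univ (x i))
  rw [cnt, h]
  refine Finset.sum_congr rfl fun a _ => ?_
  rw [cnt2, Finset.filter_filter]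
  congr 1
  ext i
  simp only [Finset.mem_filter, Finset.mem_univ, true_and]
  exact and_comm

lemma prod_comp_cnt (y : Fin n → 𝒴) (f : 𝒴 → ℝ) :
    ∏ i, f (y i) = ∏ b, f b ^ cnt b y := by
  classical
  rw [← Finset.prod_fiberwise Finset.univ y (fun i => f (y i))]
  refine Finset.prod_congr rfl fun b _ => ?_
  calc ∏ i ∈ Finset.univ.filter (fun i => y i = b), f (y i)
      = ∏ _i ∈ Finset.univ.filter (fun i => y i = b), f b :=
        Finset.prod_congr rfl fun i hi => by rw [(Finset.mem_filter.mp hi).2]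
    _ = f b ^ cnt b y := by rw [Finset.prod_const]; rfl

lemma prod_comp_cnt2 (x : Fin n → 𝒳) (y : Fin n → 𝒴) (g : 𝒳 → 𝒴 → ℝ) :
    ∏ i, g (x i) (y i) = ∏ a, ∏ b, g a b ^ cnt2 a b x y := by
  classical
  rw [← Fintype.prod_prod_type (f := fun ab : 𝒳 × 𝒴 => g ab.1 ab.2 ^ cnt2 ab.1 ab.2 x y),
    ← Finset.prod_fiberwise Finset.univ (fun i => (x i, y i)) (fun i => g (x i) (y i))]
  refine Finset.prod_congr rfl fun ab _ => ?_
  calc ∏ i ∈ Finset.univ.filter (fun i => (x i, y i) = ab), g (x i) (y i)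
      = ∏ _i ∈ Finset.univ.filter (fun i => (x i, y i) = ab), g ab.1 ab.2 :=
        Finset.prod_congr rfl fun i hi => by
          have h := (Finset.mem_filter.mp hi).2
          rw [Prod.ext_iff] at h
          simp only at h
          rw [h.1, h.2]
    _ = g ab.1 ab.2 ^ cnt2 ab.1 ab.2 x y := by
        rw [Finset.prod_const]
        congr 1
        rw [cnt2]
        congr 1
        ext i
        simp [Prod.ext_iff]

end CntLemmas

/-- Packing lemma (cross-typicality bound): for `x̄ ∈ 𝒯ⁿ_{p̄,δ}`,
`(pW)ⁿ(𝒯ⁿ_{W̄,δ}(x̄)) ≤ (n+1)^{|𝒳||𝒴|} 2^{−n(I(p̄;W̄) − f₃(δ))}` for some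
`f₃(δ) > 0` with `f₃(δ) → 0` as `δ → 0`. -/
theorem packing_lemma {𝒳 𝒴 : Type*} [Fintype 𝒳] [DecidableEq 𝒳]
    [Fintype 𝒴] [DecidableEq 𝒴] :
    ∃ f₃ : ℝ → ℝ, (∀ δ > 0, 0 < f₃ δ) ∧
      Filter.Tendsto f₃ (nhdsWithin 0 (Set.Ioi 0)) (nhds 0) ∧
      ∀ (n : ℕ), 0 < n →
        ∀ p pbar : 𝒳 → ℝ, (∀ a, 0 ≤ p a) → (∑ a, p a = 1) →
          (∀ a, 0 ≤ pbar a) → (∑ a, pbar a = 1) →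
        ∀ W Wbar : 𝒳 → 𝒴 → ℝ,
          (∀ a, (∀ b, 0 ≤ W a b) ∧ ∑ b, W a b = 1) →
          (∀ a, (∀ b, 0 ≤ Wbar a b) ∧ ∑ b, Wbar a b = 1) →
        ∀ δ > 0, ∀ xbar ∈ typSet n pbar δ,
          (∑ y ∈ condTypSet n Wbar δ xbar, ∏ i, outDist p W (y i))
            ≤ ((n + 1 : ℝ) ^ (Fintype.card 𝒳 * Fintype.card 𝒴)) *
                2 ^ (-((n : ℝ) * (mutInfo pbar Wbar - f₃ δ))) := by
  classical
  have hlog2 : (0:ℝ) < Real.log 2 := Real.log_pos one_lt_two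
  set X := Fintype.card 𝒳 with hXdef
  set Y := Fintype.card 𝒴 with hYdef
  set g : ℝ → ℝ := fun ε => 2 * Real.sqrt ε + ε with hgdef
  have hg0 : ∀ ε : ℝ, 0 ≤ ε → 0 ≤ g ε := fun ε hε => by
    simp only [hgdef]; positivity
  set f₃ : ℝ → ℝ :=
    fun δ => (g δ + X * g δ + Y * g (2 * X * δ) + X * Y * g (2 * δ)) / Real.log 2 with hf₃def
  refine ⟨f₃, ?_, ?_, ?_⟩
  · intro δ hδ
    have h1 : 0 < g δ := by
      simp only [hgdef]
      have := Real.sqrt_pos.mpr hδ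
      positivity
    have h2 : 0 ≤ (X:ℝ) * g δ := by positivity
    have h3 : 0 ≤ (Y:ℝ) * g (2 * X * δ) := by
      have := hg0 (2 * X * δ) (by positivity); positivity
    have h4 : 0 ≤ (X:ℝ) * Y * g (2 * δ) := by
      have := hg0 (2 * δ) (by positivity); positivity
    exact div_pos (by linarith) hlog2
  · have hc : Continuous f₃ := by
      simp only [hf₃def, hgdef]
      fun_prop
    have h0 : f₃ 0 = 0 := by
      simp [hf₃def, hgdef]
    exact tendsto_nhdsWithin_of_tendsto_nhds (hc.tendsto' 0 0 h0)
  intro n hn p pbar hp0 hp1 hpb0 hpb1 W Wbar hW hWbar δ hδ xbar hxbar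
  have hn' : (0:ℝ) < n := by exact_mod_cast hn
  rw [typSet, Finset.mem_filter] at hxbar
  have hxb := hxbar.2
  set B : ℝ := 2 ^ (-((n : ℝ) * (mutInfo pbar Wbar - f₃ δ))) with hBdef
  have hB : 0 < B := Real.rpow_pos_of_pos two_pos _
  by_cases hYe : IsEmpty 𝒴
  · have hT : condTypSet n Wbar δ xbar = ∅ :=
      Finset.eq_empty_of_forall_notMem fun y _ => (hYe.false (y ⟨0, hn⟩)).elim
    rw [hT, Finset.sum_empty]
    positivity
  have hYne : Nonempty 𝒴 := not_isEmpty_iff.mp hYe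
  set q : 𝒴 → ℝ := outDist p W with hqdef
  have hq0 : ∀ b, 0 ≤ q b := fun b =>
    Finset.sum_nonneg fun a _ => mul_nonneg (hp0 a) ((hW a).1 b)
  have hq1 : ∑ b, q b = 1 := by
    rw [hqdef]
    simp only [outDist]
    rw [Finset.sum_comm]
    calc ∑ a, ∑ b, p a * W a b = ∑ a, p a := by
          refine Finset.sum_congr rfl fun a _ => ?_
          rw [← Finset.mul_sum, (hW a).2, mul_one]
      _ = 1 := hp1
  set T := condTypSet n Wbar δ xbar with hTdef
  set φ : (Fin n → 𝒴) → (𝒳 × 𝒴 → Fin (n + 1)) :=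
    fun y ab => ⟨cnt2 ab.1 ab.2 xbar y, Nat.lt_succ_of_le (cnt2_le _ _ _ _)⟩ with hφdef
  have hsplit : ∑ y ∈ T, ∏ i, q (y i)
      = ∑ c : (𝒳 × 𝒴 → Fin (n + 1)), ∑ y ∈ T.filter (fun y => φ y = c), ∏ i, q (y i) :=
    (Finset.sum_fiberwise T φ _).symm
  have key : ∀ c : 𝒳 × 𝒴 → Fin (n + 1),
      (∑ y ∈ T.filter (fun y => φ y = c), ∏ i, q (y i)) ≤ B := by
    intro c
    set F := T.filter (fun y => φ y = c) with hFdef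
    rcases F.eq_empty_or_nonempty with hFe | ⟨y₀, hy₀⟩
    · rw [hFe, Finset.sum_empty]; exact hB.le
    have hy₀T : y₀ ∈ T := (Finset.mem_filter.mp hy₀).1
    have hy₀c : φ y₀ = c := (Finset.mem_filter.mp hy₀).2
    set m : 𝒳 → 𝒴 → ℕ := fun a b => cnt2 a b xbar y₀ with hmdef
    have hFcnt : ∀ y ∈ F, ∀ a b, cnt2 a b xbar y = m a b := by
      intro y hy a b
      have h : φ y = φ y₀ := ((Finset.mem_filter.mp hy).2).trans hy₀c.symm
      have h2 := congrArg Fin.val (congrFun h (a, b))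
      simpa [hφdef] using h2
    have hy₀typ := hy₀T
    rw [hTdef, condTypSet, Finset.mem_filter] at hy₀typ
    have htyp : ∀ a b, |(m a b : ℝ)/n - Wbar a b * ((cnt a xbar : ℝ)/n)| ≤ δ :=
      fun a b => (hy₀typ.2 a b).1.le
    have hrow : ∀ a, ∑ b, m a b = cnt a xbar := fun a => sum_cnt2 a xbar y₀
    set M : 𝒴 → ℕ := fun b => ∑ a, m a b with hMdef
    have hMn : ∑ b, M b = n := by
      rw [hMdef, Finset.sum_comm]
      calc ∑ a, ∑ b, m a b = ∑ a, cnt a xbar := Finset.sum_congr rfl fun a _ => hrow a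
        _ = n := sum_cnt xbar
    have hMle : ∀ b, M b ≤ n := fun b =>
      hMn ▸ Finset.single_le_sum (f := fun b => M b) (fun _ _ => Nat.zero_le _) (Finset.mem_univ b)
    have hcnty : ∀ y ∈ F, ∀ b, cnt b y = M b := by
      intro y hy b
      rw [cnt_eq_sum_cnt2 b xbar y, hMdef]
      exact Finset.sum_congr rfl fun a _ => hFcnt y hy a b
    have hconst : ∀ y ∈ F, ∏ i, q (y i) = ∏ b, q b ^ M b := by
      intro y hy
      rw [prod_comp_cnt y q]
      exact Finset.prod_congr rfl fun b _ => by rw [hcnty y hy b]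
    have hsum_eq : ∑ y ∈ F, ∏ i, q (y i) = (F.card : ℝ) * ∏ b, q b ^ M b := by
      rw [Finset.sum_congr rfl hconst, Finset.sum_const, nsmul_eq_mul]
    rw [hsum_eq]
    by_cases hzz : ∃ b, M b ≠ 0 ∧ q b = 0
    · obtain ⟨b, hMb, hqb⟩ := hzz
      have hzero : ∏ b, q b ^ M b = 0 :=
        Finset.prod_eq_zero (Finset.mem_univ b) (by rw [hqb]; exact zero_pow hMb)
      rw [hzero, mul_zero]; exact hB.le
    push_neg at hzz
    have hqpos : ∀ b, M b ≠ 0 → 0 < q b := fun b hb =>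
      lt_of_le_of_ne (hq0 b) (Ne.symm (hzz b hb))
    set b₀ : 𝒴 := Classical.arbitrary 𝒴 with hb₀
    set Vh : 𝒳 → 𝒴 → ℝ := fun a b =>
      if cnt a xbar = 0 then (if b = b₀ then 1 else 0)
      else (m a b : ℝ) / (cnt a xbar : ℝ) with hVdef
    have hV0 : ∀ a b, 0 ≤ Vh a b := by
      intro a b; rw [hVdef]; dsimp only; split_ifs <;> positivity
    have hVrow : ∀ a, ∑ b, Vh a b = 1 := by
      intro a
      by_cases hca : cnt a xbar = 0
      · simp [hVdef, hca]
      · simp only [hVdef, if_neg hca]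
        rw [← Finset.sum_div, ← Nat.cast_sum, hrow a]
        exact div_self (by exact_mod_cast hca)
    have hmle : ∀ a b, m a b ≤ cnt a xbar := fun a b =>
      hrow a ▸ Finset.single_le_sum (f := fun b => m a b) (fun _ _ => Nat.zero_le _)
        (Finset.mem_univ b)
    have hmlen : ∀ a b, m a b ≤ n := fun a b => cnt2_le a b xbar y₀
    have hVpos : ∀ a b, m a b ≠ 0 → 0 < Vh a b := by
      intro a b hmb
      have hca : cnt a xbar ≠ 0 := fun h => hmb (Nat.le_zero.mp (h ▸ hmle a b))
      rw [hVdef]; dsimp only; rw [if_neg hca]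
      exact div_pos (by exact_mod_cast Nat.pos_of_ne_zero hmb)
        (by exact_mod_cast Nat.pos_of_ne_zero hca)
    set Pi2 : ℝ := ∏ a, ∏ b, Vh a b ^ m a b with hPi2def
    have hPi2f : ∀ a b, 0 < Vh a b ^ m a b := by
      intro a b
      by_cases hmb : m a b = 0
      · rw [hmb, pow_zero]; exact one_pos
      · exact pow_pos (hVpos a b hmb) _
    have hPi2pos : 0 < Pi2 :=
      Finset.prod_pos fun a _ => Finset.prod_pos fun b _ => hPi2f a b
    have hprodV : ∀ y ∈ F, ∏ i, Vh (xbar i) (y i) = Pi2 := by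
      intro y hy
      rw [prod_comp_cnt2 xbar y Vh, hPi2def]
      exact Finset.prod_congr rfl fun a _ => Finset.prod_congr rfl fun b _ => by
        rw [hFcnt y hy a b]
    have hcard : (F.card : ℝ) * Pi2 ≤ 1 := by
      calc (F.card : ℝ) * Pi2 = ∑ y ∈ F, ∏ i, Vh (xbar i) (y i) := by
            rw [Finset.sum_congr rfl hprodV, Finset.sum_const, nsmul_eq_mul]
        _ ≤ ∑ y : Fin n → 𝒴, ∏ i, Vh (xbar i) (y i) :=
            Finset.sum_le_sum_of_subset_of_nonneg (Finset.subset_univ F)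
              (fun y _ _ => Finset.prod_nonneg fun i _ => hV0 _ _)
        _ = ∑ y ∈ Fintype.piFinset (fun _ : Fin n => (Finset.univ : Finset 𝒴)),
              ∏ i, Vh (xbar i) (y i) := by rw [Fintype.piFinset_univ]
        _ = ∏ i, ∑ b, Vh (xbar i) b := (Finset.prod_univ_sum _ _).symm
        _ = 1 := by
            rw [Finset.prod_congr rfl fun i _ => hVrow (xbar i)]
            exact Finset.prod_const_one
    have hFcard : (F.card : ℝ) ≤ Pi2⁻¹ := by
      rw [inv_eq_one_div, le_div_iff₀ hPi2pos]
      exact hcard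
    set S₁ := Finset.univ.filter (fun b => M b ≠ 0) with hS₁def
    have hS₁M : ∑ b ∈ S₁, (M b : ℝ) = n := by
      rw [hS₁def, Finset.sum_filter_of_ne (fun b _ h => by exact_mod_cast h),
        ← Nat.cast_sum, hMn]
    have hqprod_eq : ∏ b, q b ^ M b = ∏ b ∈ S₁, q b ^ M b := by
      rw [hS₁def]
      exact (Finset.prod_filter_of_ne (p := fun b => M b ≠ 0)
        (fun b _ h1 hM0 => h1 (by rw [hM0, pow_zero]))).symm
    set Q₁ : ℝ := ∏ b ∈ S₁, ((M b : ℝ)/n) ^ M b with hQ₁def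
    have hMS₁pos : ∀ b ∈ S₁, 0 < (M b : ℝ) := fun b hb => by
      have := (Finset.mem_filter.mp hb).2
      exact_mod_cast Nat.pos_of_ne_zero this
    have hQ₁pos : 0 < Q₁ :=
      Finset.prod_pos fun b hb => pow_pos (div_pos (hMS₁pos b hb) hn') _
    have hgibbs : ∏ b ∈ S₁, q b ^ M b ≤ Q₁ := by
      have hqS₁pos : ∀ b ∈ S₁, 0 < q b := fun b hb =>
        hqpos b (Finset.mem_filter.mp hb).2
      have hAq : 0 < ∏ b ∈ S₁, q b ^ M b :=
        Finset.prod_pos fun b hb => pow_pos (hqS₁pos b hb) _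
      rw [← Real.log_le_log_iff hAq hQ₁pos,
        Real.log_prod (fun b hb => ne_of_gt (pow_pos (hqS₁pos b hb) _)),
        Real.log_prod (fun b hb => ne_of_gt (pow_pos (div_pos (hMS₁pos b hb) hn') _))]
      simp only [Real.log_pow]
      exact gibbs S₁ (fun b => (M b : ℝ)) q hn' hMS₁pos hqS₁pos hS₁M
        (by rw [← hq1]
            exact Finset.sum_le_sum_of_subset_of_nonneg (Finset.filter_subset _ _)
              fun b _ _ => hq0 b)
    have hmain : (F.card : ℝ) * ∏ b, q b ^ M b ≤ Pi2⁻¹ * Q₁ := by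
      rw [hqprod_eq]
      exact mul_le_mul hFcard hgibbs
        (Finset.prod_nonneg fun b hb => pow_nonneg (hq0 b) _)
        (inv_nonneg.mpr hPi2pos.le)
    refine le_trans hmain ?_
    have hPpos : 0 < Pi2⁻¹ * Q₁ := mul_pos (inv_pos.mpr hPi2pos) hQ₁pos
    rw [hBdef, Real.rpow_def_of_pos two_pos, ← Real.exp_log hPpos]
    apply Real.exp_le_exp.mpr
    rw [Real.log_mul (ne_of_gt (inv_pos.mpr hPi2pos)) (ne_of_gt hQ₁pos), Real.log_inv]
    -- νs
    set ν : 𝒳 → 𝒴 → ℝ := fun a b => (m a b : ℝ) / n with hνdef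
    set νX : 𝒳 → ℝ := fun a => (cnt a xbar : ℝ) / n with hνXdef
    set νY : 𝒴 → ℝ := fun b => (M b : ℝ) / n with hνYdef
    have hlogPi2 : Real.log Pi2
        = (n:ℝ) * ∑ a, ∑ b, (ν a b * Real.log (ν a b) - ν a b * Real.log (νX a)) := by
      rw [hPi2def,
        Real.log_prod (fun a _ => ne_of_gt (Finset.prod_pos fun b _ => hPi2f a b)),
        Finset.mul_sum]
      refine Finset.sum_congr rfl fun a _ => ?_
      rw [Real.log_prod (fun b _ => ne_of_gt (hPi2f a b)), Finset.mul_sum]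
      refine Finset.sum_congr rfl fun b _ => ?_
      rw [Real.log_pow]
      by_cases hmb : m a b = 0
      · simp only [hνdef, hmb, Nat.cast_zero, zero_div, zero_mul, Real.log_zero,
          mul_zero, sub_zero]
      · have hca : cnt a xbar ≠ 0 := fun h => hmb (Nat.le_zero.mp (h ▸ hmle a b))
        have hνpos : (0:ℝ) < (m a b : ℝ) / n :=
          div_pos (by exact_mod_cast Nat.pos_of_ne_zero hmb) hn'
        have hνXpos : (0:ℝ) < (cnt a xbar : ℝ) / n :=
          div_pos (by exact_mod_cast Nat.pos_of_ne_zero hca) hn'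
        have hVeq : Vh a b = ((m a b : ℝ)/n) / ((cnt a xbar : ℝ)/n) := by
          rw [hVdef]; dsimp only; rw [if_neg hca]
          have hcc : ((cnt a xbar : ℝ)) ≠ 0 := by exact_mod_cast hca
          have hnn : (n:ℝ) ≠ 0 := ne_of_gt hn'
          field_simp
        simp only [hνdef, hνXdef]
        rw [hVeq, Real.log_div (ne_of_gt hνpos) (ne_of_gt hνXpos)]
        generalize Real.log ((m a b : ℝ)/(n:ℝ)) = L1
        generalize Real.log ((cnt a xbar : ℝ)/(n:ℝ)) = L2
        field_simp
    have hlogQ₁ : Real.log Q₁ = (n:ℝ) * ∑ b, νY b * Real.log (νY b) := by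
      have h1 : Real.log Q₁ = ∑ b ∈ S₁, (M b : ℝ) * Real.log ((M b : ℝ)/(n:ℝ)) := by
        rw [hQ₁def, Real.log_prod
          (fun b hb => ne_of_gt (pow_pos (div_pos (hMS₁pos b hb) hn') _))]
        exact Finset.sum_congr rfl fun b hb => by rw [Real.log_pow]
      have h2 : ∀ b, (M b : ℝ) * Real.log ((M b : ℝ)/(n:ℝ))
          = (n:ℝ) * (νY b * Real.log (νY b)) := by
        intro b
        simp only [hνYdef]
        have hc : (n:ℝ) * ((M b : ℝ)/n) = (M b : ℝ) := by field_simp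
        rw [← mul_assoc, hc]
      rw [h1, Finset.sum_congr rfl (fun b _ => h2 b),
        Finset.sum_subset (Finset.subset_univ S₁) (fun b _ hb => by
          have hM0 : M b = 0 := by simpa [hS₁def] using hb
          simp [hνYdef, hM0]),
        ← Finset.mul_sum]
    have hsum1 : ∑ a, ∑ b, ν a b * Real.log (νX a) = ∑ a, νX a * Real.log (νX a) := by
      refine Finset.sum_congr rfl fun a _ => ?_
      rw [← Finset.sum_mul]
      congr 1
      simp only [hνdef, hνXdef]
      rw [← Finset.sum_div, ← Nat.cast_sum, hrow a]
    -- goal: -Real.log Pi2 + Real.log Q₁ ≤ Real.log 2 * -(n * (mutInfo - f₃ δ))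
    have hsplit2 : (∑ a, ∑ b, (ν a b * Real.log (ν a b) - ν a b * Real.log (νX a)))
        = (∑ a, ∑ b, ν a b * Real.log (ν a b)) - ∑ a, νX a * Real.log (νX a) := by
      rw [← hsum1, ← Finset.sum_sub_distrib]
      exact Finset.sum_congr rfl fun a _ => by rw [← Finset.sum_sub_distrib]
    set qb : 𝒴 → ℝ := outDist pbar Wbar with hqbdef
    have hqb0 : ∀ b, 0 ≤ qb b := fun b =>
      Finset.sum_nonneg fun a _ => mul_nonneg (hpb0 a) ((hWbar a).1 b)
    have hqb1 : ∑ b, qb b = 1 := by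
      rw [hqbdef]
      simp only [outDist]
      rw [Finset.sum_comm]
      calc ∑ a, ∑ b, pbar a * Wbar a b = ∑ a, pbar a := by
            refine Finset.sum_congr rfl fun a _ => ?_
            rw [← Finset.mul_sum, (hWbar a).2, mul_one]
        _ = 1 := hpb1
    have hSE : shannonEntropy qb * Real.log 2 = -∑ b, qb b * Real.log (qb b) := by
      rw [shannonEntropy, neg_mul, Finset.sum_mul]
      congr 1
      refine Finset.sum_congr rfl fun b _ => ?_
      rw [Real.logb]
      field_simp
    have hCE : condEntropyChan Wbar pbar * Real.log 2
        = -∑ a, ∑ b, pbar a * Wbar a b * Real.log (Wbar a b) := by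
      rw [condEntropyChan, neg_mul, Finset.sum_mul]
      congr 1
      refine Finset.sum_congr rfl fun a _ => ?_
      rw [Finset.sum_mul]
      refine Finset.sum_congr rfl fun b _ => ?_
      rw [Real.logb]
      field_simp
    have hmu : ∑ a, ∑ b, (pbar a * Wbar a b) * Real.log (pbar a * Wbar a b)
        = (∑ a, pbar a * Real.log (pbar a))
          + ∑ a, ∑ b, pbar a * Wbar a b * Real.log (Wbar a b) := by
      rw [← Finset.sum_add_distrib]
      refine Finset.sum_congr rfl fun a _ => ?_
      have hterm : ∀ b, (pbar a * Wbar a b) * Real.log (pbar a * Wbar a b)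
          = (pbar a * Wbar a b) * Real.log (pbar a)
            + pbar a * Wbar a b * Real.log (Wbar a b) := by
        intro b
        by_cases hpa : pbar a = 0
        · simp [hpa]
        by_cases hwa : Wbar a b = 0
        · simp [hwa]
        rw [Real.log_mul hpa hwa]; ring
      rw [Finset.sum_congr rfl (fun b _ => hterm b), Finset.sum_add_distrib]
      congr 1
      have h1 : ∑ b, (pbar a * Wbar a b) * Real.log (pbar a)
          = (∑ b, Wbar a b) * (pbar a * Real.log (pbar a)) := by
        rw [Finset.sum_mul]
        exact Finset.sum_congr rfl fun b _ => by ring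
      rw [h1, (hWbar a).2, one_mul]
    have hIlog : mutInfo pbar Wbar * Real.log 2
        = -(∑ b, qb b * Real.log (qb b))
          + (∑ a, ∑ b, (pbar a * Wbar a b) * Real.log (pbar a * Wbar a b))
          - ∑ a, pbar a * Real.log (pbar a) := by
      rw [mutInfo, sub_mul, hSE, hCE, hmu]; ring
    have hf₃log : f₃ δ * Real.log 2
        = g δ + X * g δ + Y * g (2 * X * δ) + X * Y * g (2 * δ) := by
      rw [hf₃def]
      exact div_mul_cancel₀ _ (ne_of_gt hlog2)
    -- continuity bounds
    have hpb_le1 : ∀ a, pbar a ≤ 1 := fun a =>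
      hpb1 ▸ Finset.single_le_sum (fun i _ => hpb0 i) (Finset.mem_univ a)
    have hqb_le1 : ∀ b, qb b ≤ 1 := fun b =>
      hqb1 ▸ Finset.single_le_sum (fun i _ => hqb0 i) (Finset.mem_univ b)
    have hWb01 : ∀ a b, Wbar a b ≤ 1 := fun a b =>
      (hWbar a).2 ▸ Finset.single_le_sum (fun i _ => (hWbar a).1 i) (Finset.mem_univ b)
    have hνX01 : ∀ a, 0 ≤ νX a ∧ νX a ≤ 1 := fun a =>
      ⟨div_nonneg (Nat.cast_nonneg _) hn'.le,
        (div_le_one hn').mpr (by exact_mod_cast cnt_le a xbar)⟩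
    have hν01 : ∀ ab : 𝒳 × 𝒴, 0 ≤ ν ab.1 ab.2 ∧ ν ab.1 ab.2 ≤ 1 := fun ab =>
      ⟨div_nonneg (Nat.cast_nonneg _) hn'.le,
        (div_le_one hn').mpr (by exact_mod_cast hmlen ab.1 ab.2)⟩
    have hνY01 : ∀ b, 0 ≤ νY b ∧ νY b ≤ 1 := fun b =>
      ⟨div_nonneg (Nat.cast_nonneg _) hn'.le,
        (div_le_one hn').mpr (by exact_mod_cast hMle b)⟩
    have hνμ : ∀ a b, |ν a b - pbar a * Wbar a b| ≤ 2 * δ := by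
      intro a b
      have h1 : |ν a b - Wbar a b * νX a| ≤ δ := htyp a b
      have h2 : |Wbar a b * νX a - pbar a * Wbar a b| ≤ δ := by
        rw [mul_comm (pbar a), ← mul_sub, abs_mul, abs_of_nonneg ((hWbar a).1 b)]
        calc Wbar a b * |νX a - pbar a| ≤ 1 * δ :=
              mul_le_mul (hWb01 a b) (hxb a).1.le (abs_nonneg _) zero_le_one
          _ = δ := one_mul δ
      calc |ν a b - pbar a * Wbar a b|
          ≤ |ν a b - Wbar a b * νX a| + |Wbar a b * νX a - pbar a * Wbar a b| :=
            abs_sub_le _ _ _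
        _ ≤ δ + δ := add_le_add h1 h2
        _ = 2 * δ := by ring
    have hb1 : |(∑ a, νX a * Real.log (νX a)) - ∑ a, pbar a * Real.log (pbar a)|
        ≤ (X : ℝ) * g δ := by
      have h := en_cont (u := νX) (v := pbar) (ε := δ) hνX01
        (fun a => ⟨hpb0 a, hpb_le1 a⟩) (fun a => (hxb a).1.le)
      simp only [hgdef]
      exact h
    have hYd : ∀ b, |νY b - qb b| ≤ 2 * X * δ := by
      intro b
      have h1 : νY b = ∑ a, ν a b := by
        show (M b : ℝ) / n = _
        rw [hMdef]
        push_cast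
        rw [Finset.sum_div]
      have h2 : qb b = ∑ a, pbar a * Wbar a b := rfl
      rw [h1, h2, ← Finset.sum_sub_distrib]
      calc |∑ a, (ν a b - pbar a * Wbar a b)|
          ≤ ∑ a, |ν a b - pbar a * Wbar a b| := Finset.abs_sum_le_sum_abs _ _
        _ ≤ ∑ _a : 𝒳, 2 * δ := Finset.sum_le_sum fun a _ => hνμ a b
        _ = (X : ℝ) * (2 * δ) := by
            rw [Finset.sum_const, Finset.card_univ, nsmul_eq_mul]
        _ = 2 * X * δ := by ring
    have hb2 : |(∑ b, νY b * Real.log (νY b)) - ∑ b, qb b * Real.log (qb b)|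
        ≤ (Y : ℝ) * g (2 * X * δ) := by
      have h := en_cont (u := νY) (v := qb) (ε := 2 * X * δ) hνY01
        (fun b => ⟨hqb0 b, hqb_le1 b⟩) hYd
      simp only [hgdef]
      exact h
    have hb3 : |(∑ a, ∑ b, ν a b * Real.log (ν a b))
        - ∑ a, ∑ b, (pbar a * Wbar a b) * Real.log (pbar a * Wbar a b)|
        ≤ (X : ℝ) * Y * g (2 * δ) := by
      have h := en_cont (ι := 𝒳 × 𝒴) (u := fun ab => ν ab.1 ab.2)
        (v := fun ab => pbar ab.1 * Wbar ab.1 ab.2) (ε := 2 * δ) hν01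
        (fun ab => ⟨mul_nonneg (hpb0 ab.1) ((hWbar ab.1).1 ab.2),
          mul_le_one₀ (hpb_le1 ab.1) ((hWbar ab.1).1 ab.2) (hWb01 ab.1 ab.2)⟩)
        (fun ab => hνμ ab.1 ab.2)
      rw [Fintype.sum_prod_type, Fintype.sum_prod_type, Fintype.card_prod] at h
      simp only [hgdef]
      push_cast
      push_cast at h
      exact h
    have core : (∑ a, νX a * Real.log (νX a)) + (∑ b, νY b * Real.log (νY b))
        - (∑ a, ∑ b, ν a b * Real.log (ν a b))
        ≤ (-(mutInfo pbar Wbar) + f₃ δ) * Real.log 2 := by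
      have e1 := abs_le.mp hb1
      have e2 := abs_le.mp hb2
      have e3 := abs_le.mp hb3
      have hgδ : 0 ≤ g δ := hg0 δ hδ.le
      have hexpand : (-(mutInfo pbar Wbar) + f₃ δ) * Real.log 2
          = -(mutInfo pbar Wbar * Real.log 2) + f₃ δ * Real.log 2 := by ring
      rw [hexpand, hIlog, hf₃log]
      linarith [e1.2, e2.2, e3.1, hgδ]
    rw [hlogPi2, hlogQ₁, hsplit2]
    have hL : -((n:ℝ) * ((∑ a, ∑ b, ν a b * Real.log (ν a b))
            - ∑ a, νX a * Real.log (νX a)))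
          + (n:ℝ) * (∑ b, νY b * Real.log (νY b))
        = (n:ℝ) * ((∑ a, νX a * Real.log (νX a)) + (∑ b, νY b * Real.log (νY b))
            - (∑ a, ∑ b, ν a b * Real.log (ν a b))) := by ring
    have hR : Real.log 2 * -((n:ℝ) * (mutInfo pbar Wbar - f₃ δ))
        = (n:ℝ) * ((-(mutInfo pbar Wbar) + f₃ δ) * Real.log 2) := by ring
    rw [hL, hR]
    exact mul_le_mul_of_nonneg_left core hn'.le

  calc ∑ y ∈ T, ∏ i, q (y i)
      = ∑ c : (𝒳 × 𝒴 → Fin (n + 1)), ∑ y ∈ T.filter (fun y => φ y = c), ∏ i, q (y i) := hsplit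
    _ ≤ ∑ _c : (𝒳 × 𝒴 → Fin (n + 1)), B := Finset.sum_le_sum fun c _ => key c
    _ = (Fintype.card (𝒳 × 𝒴 → Fin (n + 1)) : ℝ) * B := by
        rw [Finset.sum_const, Finset.card_univ, nsmul_eq_mul]
    _ = ((n + 1 : ℝ) ^ (X * Y)) * B := by
        congr 1
        rw [Fintype.card_fun, Fintype.card_fin, Fintype.card_prod]
        push_cast
        ring
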